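/- arXiv:1112.0817 — 8 statements merged into one kernel-verified Lean document; each statement's English description precedes it below -/
import Mathlib

section
/- Let (X,τ) be a non-compact, locally compact Hausdorff topological space. Then every subset of X closed with respect to τ is compact with respect to the de Groot dual topology τ^G. -/
open Topology Set

/-- A set is saturated if it is the intersection of the open sets containing it. -/
def Saturated {X : Type*} (t : TopologicalSpace X) (A : Set X) : Prop :=
  A = ⋂₀ {U : Set X | t.IsOpen U ∧ A ⊆ U}

/-- The de Groot dual (co-compact) topology: generated by taking all compact
saturated subsets of `(X, t)` as a subbase for the closed sets. -/
def deGrootDual {X : Type*} (t : TopologicalSpace X) : TopologicalSpace X :=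
  TopologicalSpace.generateFrom
    {U : Set X | ∃ K : Set X, @IsCompact X t K ∧ Saturated t K ∧ U = Kᶜ}

/-- In a Hausdorff space, the original topology is finer than the de Groot dual. -/
lemma le_deGrootDual {X : Type*} (t : TopologicalSpace X) (h2 : @T2Space X t) :
    t ≤ deGrootDual t := by
  letI := t
  refine le_generateFrom ?_
  rintro U ⟨K, hK, -, rfl⟩
  exact hK.isClosed.isOpen_compl

/-- In a non-compact, locally compact Hausdorff space, every closed set is
compact with respect to the de Groot dual topology. -/
theorem isCompact_deGrootDual_of_isClosed {X : Type*} (t : TopologicalSpace X)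
    (h2 : @T2Space X t) (hlc : @LocallyCompactSpace X t) (hnc : ¬ @CompactSpace X t)
    (C : Set X) (hC : @IsClosed X t C) :
    @IsCompact X (deGrootDual t) C := by
  letI := t
  rw [@isCompact_iff_ultrafilter_le_nhds X (deGrootDual t) C]
  intro F hF
  by_cases hcase : ∃ K : Set X, @IsCompact X t K ∧ K ∈ F
  · -- some compact set is in the ultrafilter
    obtain ⟨K, hK, hKF⟩ := hcase
    obtain ⟨x, hxK, hxF⟩ := hK.ultrafilter_le_nhds F (Filter.le_principal_iff.mpr hKF)
    have hxC : x ∈ C := by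
      have hcl : ClusterPt x (F : Filter X) := ClusterPt.of_le_nhds hxF
      have := mem_closure_iff_clusterPt.mpr (hcl.mono hF)
      rwa [hC.closure_eq] at this
    refine ⟨x, hxC, le_trans hxF ?_⟩
    exact nhds_mono (le_deGrootDual t h2)
  · -- no compact set is in the ultrafilter: F converges to every point in the dual
    push_neg at hcase
    obtain ⟨x, hxC⟩ : C.Nonempty := Filter.nonempty_of_mem (Filter.le_principal_iff.mp hF)
    refine ⟨x, hxC, ?_⟩
    rw [deGrootDual, TopologicalSpace.nhds_generateFrom]
    refine le_iInf fun U => le_iInf fun hU => ?_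
    obtain ⟨-, K, hK, -, rfl⟩ := hU
    exact Filter.le_principal_iff.mpr (Ultrafilter.compl_mem_iff_notMem.mpr (hcase K hK))
end

section
/- Let (X,τ) be a non-compact, locally compact Hausdorff topological space. Then τ = τ^GG, i.e. the de Groot dual of the de Groot dual of τ equals τ. -/
open Topology Set

lemma compact_elim_subcover {X : Type*} {t' : TopologicalSpace X} {s : Set X}
    (hs : @IsCompact X t' s) {ι : Type*} (U : ι → Set X) (hU : ∀ i, IsOpen[t'] (U i))
    (h : s ⊆ ⋃ i, U i) : ∃ f : Finset ι, s ⊆ ⋃ i ∈ f, U i := by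
  letI := t'
  exact hs.elim_finite_subcover U hU h

section Helpers

variable {X : Type*} [t : TopologicalSpace X]

lemma saturated_of_sep {A : Set X}
    (h : ∀ x ∉ A, ∃ U, t.IsOpen U ∧ A ⊆ U ∧ x ∉ U) : Saturated t A := by
  apply subset_antisymm
  · intro x hx U hU
    exact hU.2 hx
  · intro x hx
    by_contra hxA
    obtain ⟨U, hU, hAU, hxU⟩ := h x hxA
    exact hxU (hx U ⟨hU, hAU⟩)

lemma saturated_all [T1Space X] (A : Set X) : Saturated t A := by
  refine saturated_of_sep fun x hx => ⟨{x}ᶜ, isOpen_compl_singleton, ?_, by simp⟩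
  intro y hy
  simp only [mem_compl_iff, mem_singleton_iff]
  rintro rfl
  exact hx hy

lemma dual_isOpen_iff [T2Space X] {U : Set X} :
    IsOpen[deGrootDual t] U ↔ U = ∅ ∨ ∃ K : Set X, IsCompact K ∧ U = Kᶜ := by
  constructor
  · intro h
    induction h with
    | basic V hV =>
      obtain ⟨K, hK, -, rfl⟩ := hV
      exact Or.inr ⟨K, hK, rfl⟩
    | univ => exact Or.inr ⟨∅, isCompact_empty, by simp⟩
    | inter V W _ _ ihV ihW =>
      rcases ihV with rfl | ⟨K, hK, rfl⟩
      · simp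
      rcases ihW with rfl | ⟨L, hL, rfl⟩
      · simp
      exact Or.inr ⟨K ∪ L, hK.union hL, by rw [compl_union]⟩
    | sUnion S hS ih =>
      by_cases hne : ∃ V ∈ S, V ≠ ∅
      · obtain ⟨V₀, hV₀S, hV₀⟩ := hne
        obtain ⟨K₀, hK₀, rfl⟩ := (ih V₀ hV₀S).resolve_left hV₀
        have hK₀T : K₀ ∈ {K : Set X | IsCompact K ∧ Kᶜ ∈ S} := ⟨hK₀, hV₀S⟩
        refine Or.inr ⟨⋂₀ {K : Set X | IsCompact K ∧ Kᶜ ∈ S}, ?_, ?_⟩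
        · refine hK₀.of_isClosed_subset ?_ (sInter_subset_of_mem hK₀T)
          exact isClosed_sInter fun K hK => hK.1.isClosed
        · ext x
          simp only [mem_sUnion, mem_compl_iff, mem_sInter, not_forall]
          constructor
          · rintro ⟨V, hVS, hxV⟩
            rcases ih V hVS with rfl | ⟨K, hK, rfl⟩
            · exact absurd hxV (notMem_empty x)
            · exact ⟨K, ⟨hK, hVS⟩, hxV⟩
          · rintro ⟨K, hKT, hxK⟩
            exact ⟨Kᶜ, hKT.2, hxK⟩
      · push_neg at hne
        left
        exact sUnion_eq_empty.mpr hne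
  · rintro (rfl | ⟨K, hK, rfl⟩)
    · exact @isOpen_empty X (deGrootDual t)
    · exact TopologicalSpace.GenerateOpen.basic _ ⟨K, hK, saturated_all K, rfl⟩

lemma isCompact_dual_of_isClosed [T2Space X] {C : Set X} (hC : IsClosed C) :
    @IsCompact X (deGrootDual t) C := by
  have hopen : ∀ {V : Set X}, IsOpen[deGrootDual t] V → IsOpen V := by
    intro V hV
    rcases dual_isOpen_iff.mp hV with rfl | ⟨K, hK, rfl⟩
    · exact isOpen_empty
    · exact hK.isClosed.isOpen_compl
  refine @isCompact_of_finite_subcover X (deGrootDual t) C ?_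
  intro ι U hU hcov
  rcases C.eq_empty_or_nonempty with rfl | ⟨c, hc⟩
  · exact ⟨∅, by simp⟩
  obtain ⟨i₀, hci₀⟩ : ∃ i, c ∈ U i := by
    simpa using hcov hc
  obtain ⟨K₀, hK₀, hUi₀⟩ : ∃ K : Set X, IsCompact K ∧ U i₀ = Kᶜ := by
    rcases dual_isOpen_iff.mp (hU i₀) with h | h
    · rw [h] at hci₀; exact absurd hci₀ (notMem_empty c)
    · exact h
  have hKC : IsCompact (K₀ ∩ C) := hK₀.inter_right hC
  obtain ⟨s, hs⟩ := hKC.elim_finite_subcover U (fun i => hopen (hU i))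
    (fun x hx => hcov hx.2)
  classical
  refine ⟨insert i₀ s, fun x hx => ?_⟩
  by_cases hxK : x ∈ K₀
  · obtain ⟨i, hi, hxi⟩ : ∃ i ∈ s, x ∈ U i := by simpa using hs ⟨hxK, hx⟩
    exact mem_biUnion (Finset.mem_insert_of_mem hi) hxi
  · refine mem_biUnion (Finset.mem_insert_self i₀ s) ?_
    rw [hUi₀]; exact hxK

lemma isClosed_of_isCompact_dual [T2Space X] [LocallyCompactSpace X] {C : Set X}
    (hC : @IsCompact X (deGrootDual t) C) : IsClosed C := by
  rw [← closure_subset_iff_isClosed]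
  intro x hx
  by_contra hxC
  have hUopen : ∀ k : {K : Set X // IsCompact K ∧ K ∈ 𝓝 x},
      IsOpen[deGrootDual t] (k : Set X)ᶜ := fun k =>
    dual_isOpen_iff.mpr (Or.inr ⟨k, k.2.1, rfl⟩)
  have hcov : C ⊆ ⋃ k : {K : Set X // IsCompact K ∧ K ∈ 𝓝 x}, (k : Set X)ᶜ := by
    intro y hy
    have hyx : y ≠ x := fun h => hxC (h ▸ hy)
    obtain ⟨V, W, hV, hW, hxV, hyW, hVW⟩ := t2_separation hyx.symm
    obtain ⟨K, hKx, hKV, hK⟩ := local_compact_nhds (hV.mem_nhds hxV)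
    refine mem_iUnion.mpr ⟨⟨K, hK, hKx⟩, fun hyK => ?_⟩
    exact (Set.disjoint_left.mp hVW (hKV hyK)) hyW
  obtain ⟨s, hs⟩ := compact_elim_subcover hC _ hUopen hcov
  have hN : (⋂ k ∈ s, (k : Set X)) ∈ 𝓝 x :=
    (Filter.biInter_mem s.finite_toSet).mpr fun k _ => k.2.2
  obtain ⟨y, hyN, hyC⟩ := mem_closure_iff_nhds.mp hx _ hN
  obtain ⟨k, hk, hyk⟩ : ∃ k ∈ s, y ∈ ((k : Set X))ᶜ := by simpa using hs hyC
  exact hyk (mem_iInter₂.mp hyN k hk)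

end Helpers

/-- For a non-compact, locally compact Hausdorff space, the double de Groot dual
equals the original topology. -/
theorem deGrootDual_deGrootDual {X : Type*} (t : TopologicalSpace X)
    (h2 : @T2Space X t) (hlc : @LocallyCompactSpace X t) (hnc : ¬ @CompactSpace X t) :
    deGrootDual (deGrootDual t) = t := by
  haveI := h2; haveI := hlc
  apply le_antisymm
  · -- deGrootDual (deGrootDual t) ≤ t : every t-open set is a generator
    rw [TopologicalSpace.le_def]
    intro U hU
    exact TopologicalSpace.GenerateOpen.basic _
      ⟨Uᶜ, isCompact_dual_of_isClosed (isClosed_compl_iff.mpr hU),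
        @saturated_of_sep X (deGrootDual t) Uᶜ fun x hxU =>
          ⟨{x}ᶜ, dual_isOpen_iff.mpr (Or.inr ⟨{x}, isCompact_singleton, rfl⟩),
            fun y hy => by simp only [mem_compl_iff, mem_singleton_iff]; rintro rfl; exact hxU hy,
            by simp⟩,
        (compl_compl U).symm⟩
  · -- t ≤ deGrootDual (deGrootDual t)
    refine le_generateFrom ?_
    rintro V ⟨K, hK, -, rfl⟩
    exact (isClosed_of_isCompact_dual hK).isOpen_compl
end

section
/- Let (X,τ) be a locally compact Hausdorff topological space. Then for every compact subset K of (X,τ), the subspace topologies induced on K by τ and by the de Groot dual topology τ^G coincide. -/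
open Topology Set

lemma saturated_of_t1 {X : Type*} (t : TopologicalSpace X) (h1 : @T1Space X t)
    (A : Set X) : Saturated t A := by
  letI := t
  apply subset_antisymm
  · intro x hx U hU
    exact hU.2 hx
  · intro x hx
    by_contra hxA
    have hmem : ({x}ᶜ : Set X) ∈ {U : Set X | t.IsOpen U ∧ A ⊆ U} := by
      refine ⟨isOpen_compl_singleton, fun a ha h => ?_⟩
      exact hxA (h ▸ ha)
    exact hx ({x}ᶜ) hmem rfl

/-- In a locally compact Hausdorff space, the original topology and the de Groot
dual topology induce the same subspace topology on every compact subset. -/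
theorem deGrootDual_induced_eq_on_compact {X : Type*} (t : TopologicalSpace X)
    (h2 : @T2Space X t) (hlc : @LocallyCompactSpace X t)
    (K : Set X) (hK : @IsCompact X t K) :
    TopologicalSpace.induced (Subtype.val : K → X) t =
      TopologicalSpace.induced (Subtype.val : K → X) (deGrootDual t) := by
  letI := t
  apply le_antisymm
  · -- t is finer than deGrootDual t
    apply induced_mono
    apply le_generateFrom
    rintro U ⟨C, hC, -, rfl⟩
    exact (hC.isClosed).isOpen_compl
  · -- every t-induced open is deGrootDual-induced open
    intro s hs
    rw [@isOpen_induced_iff _ _ t] at hs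
    rw [@isOpen_induced_iff _ _ (deGrootDual t)]
    obtain ⟨U, hU, rfl⟩ := hs
    set C := K ∩ Uᶜ with hCdef
    have hCcompact : IsCompact C := hK.inter_right (isClosed_compl_iff.mpr hU)
    refine ⟨Cᶜ, ?_, ?_⟩
    · show TopologicalSpace.GenerateOpen _ Cᶜ
      exact .basic _ ⟨C, hCcompact, saturated_of_t1 t inferInstance C, rfl⟩
    · ext ⟨x, hx⟩
      simp [hCdef, hx]
end

section
/- Let (P,π) be a framework and define x ~ y iff π(x) = π(y), where π(x) = {U ∈ π : x ∈ U}. Then the double dual framework (P^dd, π^dd) is isomorphic to the quotient framework (P_~, g(π)), where g : P → P_~ is the quotient map. -/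
open Set

universe u

/-- A framework: a set of places together with a framology, a family of subsets. -/
structure Framework where
  P : Type u
  pi : Set (Set P)

/-- The set of members of the framology containing a given place. -/
def Framework.pt (F : Framework) (x : F.P) : Set F.pi :=
  {U : F.pi | x ∈ (U : Set F.P)}

/-- The dual framework: places are the members of the framology, and the
framology consists of the sets `pt x = {U ∈ π | x ∈ U}` for `x ∈ P`. -/
def Framework.dual (F : Framework) : Framework :=
  ⟨F.pi, Set.range F.pt⟩

/-- A framework is T0 if distinct places are separated by a member of the framology. -/
def Framework.T0 (F : Framework) : Prop :=
  ∀ x y : F.P, x ≠ y → ∃ U ∈ F.pi, Xor' (x ∈ U) (y ∈ U)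

/-- A framework isomorphism: a bijection of places whose image map carries the
framology of the source onto the framology of the target (hence its inverse is
also a framework morphism). -/
def Framework.Iso (F G : Framework) : Prop :=
  ∃ f : F.P → G.P, Function.Bijective f ∧ (Set.image f) '' F.pi = G.pi

/-- The quotient framework of `F` by the equivalence `x ~ y ↔ π(x) = π(y)`. -/
def Framework.ptQuotient (F : Framework) : Framework :=
  let s : Setoid F.P := ⟨fun x y => F.pt x = F.pt y,
    ⟨fun _ => rfl, Eq.symm, Eq.trans⟩⟩
  ⟨Quotient s, (Set.image (Quotient.mk s)) '' F.pi⟩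

/-- The double dual of a framework is isomorphic to its quotient by the
equivalence identifying places contained in the same framology members. -/
theorem double_dual_iso_quotient (F : Framework) :
    F.dual.dual.Iso F.ptQuotient := by
  classical
  let s : Setoid F.P := ⟨fun x y => F.pt x = F.pt y,
    ⟨fun _ => rfl, Eq.symm, Eq.trans⟩⟩
  let f : F.dual.dual.P → Quotient s :=
    fun A => Quotient.mk s (Classical.choose (A : ↥(Set.range F.pt)).2)
  have hf : ∀ x : F.P, f ⟨F.pt x, ⟨x, rfl⟩⟩ = Quotient.mk s x := by
    intro x
    exact Quotient.sound (Classical.choose_spec (⟨x, rfl⟩ : F.pt x ∈ Set.range F.pt))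
  have key : ∀ U : ↥F.pi, f '' (F.dual.pt U) = (Quotient.mk s) '' U.1 := by
    intro U
    ext q
    constructor
    · rintro ⟨⟨Aval, hAr⟩, hA, rfl⟩
      refine ⟨Classical.choose hAr, ?_, rfl⟩
      have hs := Classical.choose_spec hAr
      have : U ∈ F.pt (Classical.choose hAr) := by rw [hs]; exact hA
      exact this
    · rintro ⟨y, hy, rfl⟩
      exact ⟨⟨F.pt y, ⟨y, rfl⟩⟩, hy, hf y⟩
  refine ⟨f, ⟨?_, ?_⟩, ?_⟩
  · rintro ⟨A, hA⟩ ⟨B, hB⟩ h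
    have h' : F.pt (Classical.choose hA) = F.pt (Classical.choose hB) :=
      Quotient.exact h
    have : A = B := by
      rw [← Classical.choose_spec hA, ← Classical.choose_spec hB, h']
    exact Subtype.ext this
  · intro q
    induction q using Quotient.ind with
    | _ x => exact ⟨⟨F.pt x, ⟨x, rfl⟩⟩, hf x⟩
  · show (Set.image f) '' (Set.range F.dual.pt) = (Set.image (Quotient.mk s)) '' F.pi
    ext S
    constructor
    · rintro ⟨T, ⟨U, rfl⟩, rfl⟩
      exact ⟨U.1, U.2, (key U).symm⟩
    · rintro ⟨V, hV, rfl⟩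
      exact ⟨F.dual.pt ⟨V, hV⟩, ⟨⟨V, hV⟩, rfl⟩, key ⟨V, hV⟩⟩
end

section
/- Let (P,⊑,≺) be a causal site, let π be the family of all maximal centered subsets of P, and let (X,τ) be the topological space with X = π and closed subbase {π(x) : x ∈ P}, where π(x) = {U ∈ π : x ∈ U}. Then (X,τ) is compact. -/
open Set

/-- A causal site of Christensen and Crane: a set of regions with a partial
order `⊑` (here `≤`) having binary suprema and a least element `⊥`, and a
relation `≺` (here `prec`) which is a strict partial order on `P ∖ {⊥}`,
satisfying the Christensen–Crane axioms. -/
structure IsCausalSite (P : Type*) [SemilatticeSup P] [OrderBot P]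
    (prec : P → P → Prop) : Prop where
  prec_irrefl : ∀ a : P, a ≠ ⊥ → ¬ prec a a
  prec_trans : ∀ a b c : P, a ≠ ⊥ → b ≠ ⊥ → c ≠ ⊥ → prec a b → prec b c → prec a c
  ax1 : ∀ a b c : P, b ≤ a → prec a c → prec b c
  ax2 : ∀ a b c : P, b ≤ a → prec c a → prec c b
  ax3 : ∀ a b c : P, prec a c → prec b c → prec (a ⊔ b) c
  ax4 : ∀ a b : P, ∃ ba : P, prec ba a ∧ ba ≤ b ∧ ∀ c : P, prec c a → c ≤ b → c ≤ ba

/-- A subset `F` is centered if every finite subset of `F` has a common lower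
bound different from `⊥`. -/
def Centered {P : Type*} [SemilatticeSup P] [OrderBot P] (F : Set P) : Prop :=
  ∀ s : Finset P, ↑s ⊆ F → ∃ y : P, y ≠ ⊥ ∧ ∀ x ∈ s, y ≤ x

/-- The set of maximal centered subsets of `P`. -/
def maxCentered (P : Type*) [SemilatticeSup P] [OrderBot P] : Set (Set P) :=
  {M | Centered M ∧ ∀ N : Set P, Centered N → M ⊆ N → N = M}

/-- The topology on the set of maximal centered subsets, generated by declaring
the sets `π(x) = {U | x ∈ U}`, for `x ∈ P`, a subbase for the closed sets. -/
def causalTopology (P : Type*) [SemilatticeSup P] [OrderBot P] :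
    TopologicalSpace (maxCentered P) :=
  TopologicalSpace.generateFrom
    {V : Set (maxCentered P) | ∃ x : P, V = {U : maxCentered P | x ∈ (U : Set P)}ᶜ}

lemma exists_maxCentered_superset {P : Type*} [SemilatticeSup P] [OrderBot P]
    {A : Set P} (hA : Centered A) : ∃ M ∈ maxCentered P, A ⊆ M := by
  obtain ⟨M, hAM, hM⟩ := zorn_subset_nonempty {N : Set P | Centered N}
    (fun c hcS hchain hcne => by
      refine ⟨⋃₀ c, ?_, fun s hs => subset_sUnion_of_mem hs⟩
      intro s hs
      have : ∃ N ∈ c, ↑s ⊆ N := by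
        classical
        induction s using Finset.induction_on with
        | empty => exact ⟨hcne.choose, hcne.choose_spec, by simp⟩
        | @insert a t ha ih =>
          obtain ⟨N, hNc, hN⟩ := ih (fun x hx' =>
            hs (Finset.mem_coe.mpr (Finset.mem_insert.mpr (Or.inr hx'))))
          obtain ⟨N', hN'c, haN'⟩ := hs (Finset.mem_coe.mpr (Finset.mem_insert_self a t))
          rcases hchain.total hNc hN'c with hle | hle
          · exact ⟨N', hN'c, by
              intro x hx'
              rcases Finset.mem_insert.mp hx' with rfl | hx'
              · exact haN'
              · exact hle (hN hx')⟩
          · exact ⟨N, hNc, by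
              intro x hx'
              rcases Finset.mem_insert.mp hx' with rfl | hx'
              · exact hle haN'
              · exact hN hx'⟩
      obtain ⟨N, hNc, hsN⟩ := this
      exact hcS hNc s hsN)
    A hA
  exact ⟨M, ⟨hM.prop, fun N hN hMN => (hM.eq_of_le hN hMN).symm⟩, hAM⟩

/-- The topological space associated to a causal site is compact. -/
theorem causalTopology_compact {P : Type*} [SemilatticeSup P] [OrderBot P]
    (prec : P → P → Prop) (h : IsCausalSite P prec) :
    @CompactSpace (maxCentered P) (causalTopology P) := by
  letI := causalTopology P
  rw [← isCompact_univ_iff, isCompact_iff_ultrafilter_le_nhds]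
  intro F _
  -- the set of x with π(x) ∈ F
  set A : Set P := {x : P | {U : maxCentered P | x ∈ (U : Set P)} ∈ F} with hA
  have hAc : Centered A := by
    intro s hs
    have hmem : {U : maxCentered P | ∀ x ∈ s, x ∈ (U : Set P)} ∈ F := by
      have : {U : maxCentered P | ∀ x ∈ s, x ∈ (U : Set P)} =
          ⋂ x ∈ s, {U : maxCentered P | x ∈ (U : Set P)} := by
        ext U; simp
      rw [this]
      exact (Filter.biInter_finset_mem s).mpr fun x hx => hs hx
    obtain ⟨U, hU⟩ := Filter.nonempty_of_mem hmem
    have hUc : Centered (U : Set P) := U.2.1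
    exact hUc s (fun x hx => hU x hx)
  obtain ⟨M, hM, hAM⟩ := exists_maxCentered_superset hAc
  refine ⟨⟨M, hM⟩, trivial, ?_⟩
  rw [causalTopology, TopologicalSpace.nhds_generateFrom]
  refine le_iInf fun s => le_iInf fun hs => ?_
  obtain ⟨hMs, x, rfl⟩ := hs
  rw [Filter.le_principal_iff]
  have hxM : x ∉ M := hMs
  have hxA : x ∉ A := fun hx => hxM (hAM hx)
  exact Ultrafilter.compl_mem_iff_notMem.mpr hxA
end

section
/- Let (P,⊑,≺) be a causal site, π the family of all maximal centered subsets of P, and (X,τ) the space with X = π and closed subbase {π(x) : x ∈ P}. Then (X,τ) is T1. -/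
open Set

/-- The topological space associated to a causal site is T1. -/
theorem causalTopology_t1 {P : Type*} [SemilatticeSup P] [OrderBot P]
    (prec : P → P → Prop) (h : IsCausalSite P prec) :
    @T1Space (maxCentered P) (causalTopology P) := by
  letI := causalTopology P
  rw [t1Space_iff_exists_open]
  intro a b hab
  have hsub : ¬ ((↑b : Set P) ⊆ ↑a) := by
    intro hs
    exact hab (Subtype.ext (b.2.2 ↑a a.2.1 hs))
  obtain ⟨x, hxb, hxa⟩ := not_subset.mp hsub
  refine ⟨{U : maxCentered P | x ∈ (U : Set P)}ᶜ, ?_, hxa, fun hc => hc hxb⟩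
  exact TopologicalSpace.GenerateOpen.basic _ ⟨x, rfl⟩
end

section
/- Let M = ℝ⁴ be Minkowski space and let P be the lattice of sets generated under finite unions and finite intersections by the closed diamonds ◇(p,q) = J⁺(p) ∩ J⁻(q) with p, q ∈ ℚ⁴, p ≤ q. Then P is a closed base for the co-compact (de Groot dual) topology of the Euclidean topology on M: every Euclidean-compact set K ⊆ M and every point x ∉ K can be separated by a finite union of rational diamonds containing K and missing x. -/
open Set

/-- Minkowski space: `ℝ⁴` with coordinates indexed by `Fin 4`. -/
abbrev Mink : Type := Fin 4 → ℝ

/-- The Minkowski quadratic form of signature `(1, -1, -1, -1)`. -/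
def eta (v : Mink) : ℝ := v 0 ^ 2 - v 1 ^ 2 - v 2 ^ 2 - v 3 ^ 2

/-- The causal order: `p ≤ q` iff `q - p` is non-past-oriented and non-spacelike. -/
def causalLe (p q : Mink) : Prop := 0 ≤ (q - p) 0 ∧ 0 ≤ eta (q - p)

/-- The causal future of a point. -/
def Jplus (p : Mink) : Set Mink := {x | causalLe p x}

/-- The causal past of a point. -/
def Jminus (q : Mink) : Set Mink := {x | causalLe x q}

/-- The closed diamond determined by two points. -/
def Diamond (p q : Mink) : Set Mink := Jplus p ∩ Jminus q

/-- A point of `ℝ⁴` has rational coordinates. -/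
def IsRationalPoint (p : Mink) : Prop := ∀ j : Fin 4, ∃ a : ℚ, p j = (a : ℝ)

lemma eta_sub_continuous (w : Mink) : Continuous fun z : Mink => eta (z - w) := by
  unfold eta
  simp only [Pi.sub_apply]
  fun_prop

lemma eta_sub_continuous' (w : Mink) : Continuous fun z : Mink => eta (w - z) := by
  unfold eta
  simp only [Pi.sub_apply]
  fun_prop

lemma abs_le_of_sq_le (A u : ℝ) (hA : 0 ≤ A) (h : u^2 ≤ A^2) : |u| ≤ A := by
  rcases abs_cases u with ⟨he, _⟩ | ⟨he, _⟩ <;> rw [he] <;> nlinarith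

set_option maxHeartbeats 4000000 in
lemma exists_good_diamond {x y : Mink} (hxy : x ≠ y) :
    ∃ p q : Mink, IsRationalPoint p ∧ IsRationalPoint q ∧ causalLe p q ∧
      y ∈ interior (Diamond p q) ∧ x ∉ Diamond p q := by
  obtain ⟨j0, hj0⟩ : ∃ j, x j ≠ y j := by
    by_contra h; push_neg at h; exact hxy (funext h)
  have hεpos : 0 < |x j0 - y j0| := abs_pos.2 (sub_ne_zero.2 hj0)
  set ε := |x j0 - y j0| with hεdef
  obtain ⟨δ, hδ0, hδε⟩ := exists_rat_btwn (show (0:ℝ) < ε/5 by linarith)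
  have hδpos : (0:ℝ) < δ := hδ0
  obtain ⟨a, ha1, ha2⟩ := exists_rat_btwn (show y 0 - 2*(δ:ℝ) < y 0 - δ by linarith)
  obtain ⟨b, hb1, hb2⟩ := exists_rat_btwn (show y 0 + (δ:ℝ) < y 0 + 2*δ by linarith)
  obtain ⟨s1, hs1a, hs1b⟩ := exists_rat_btwn (show y 1 - (δ:ℝ)/4 < y 1 + δ/4 by linarith)
  obtain ⟨s2, hs2a, hs2b⟩ := exists_rat_btwn (show y 2 - (δ:ℝ)/4 < y 2 + δ/4 by linarith)
  obtain ⟨s3, hs3a, hs3b⟩ := exists_rat_btwn (show y 3 - (δ:ℝ)/4 < y 3 + δ/4 by linarith)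
  set p : Mink := ![(a:ℝ), s1, s2, s3] with hp
  set q : Mink := ![(b:ℝ), s1, s2, s3] with hq
  have hp0 : p 0 = (a:ℝ) := by simp [hp]
  have hp1 : p 1 = (s1:ℝ) := by simp [hp]
  have hp2 : p 2 = (s2:ℝ) := by simp [hp]
  have hp3 : p 3 = (s3:ℝ) := by simp [hp]
  have hq0 : q 0 = (b:ℝ) := by simp [hq]
  have hq1 : q 1 = (s1:ℝ) := by simp [hq]
  have hq2 : q 2 = (s2:ℝ) := by simp [hq]
  have hq3 : q 3 = (s3:ℝ) := by simp [hq]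
  clear_value p q
  have etaeq : ∀ u v : Mink, eta (u - v) =
      (u 0 - v 0)^2 - (u 1 - v 1)^2 - (u 2 - v 2)^2 - (u 3 - v 3)^2 := by
    intro u v; simp [eta, Pi.sub_apply]
  refine ⟨p, q, ?_, ?_, ?_, ?_, ?_⟩
  · intro j; fin_cases j
    exacts [⟨a, hp0⟩, ⟨s1, hp1⟩, ⟨s2, hp2⟩, ⟨s3, hp3⟩]
  · intro j; fin_cases j
    exacts [⟨b, hq0⟩, ⟨s1, hq1⟩, ⟨s2, hq2⟩, ⟨s3, hq3⟩]
  · constructor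
    · simp only [Pi.sub_apply, hp0, hq0]; linarith
    · rw [etaeq, hp0, hq0, hp1, hq1, hp2, hq2, hp3, hq3]; nlinarith
  · -- y in interior
    have hUopen : IsOpen {z : Mink | (p 0 < z 0 ∧ 0 < eta (z - p)) ∧
        (z 0 < q 0 ∧ 0 < eta (q - z))} := by
      apply IsOpen.inter
      · exact (isOpen_lt continuous_const (continuous_apply 0)).inter
          (isOpen_lt continuous_const (eta_sub_continuous p))
      · exact (isOpen_lt (continuous_apply 0) continuous_const).inter
          (isOpen_lt continuous_const (eta_sub_continuous' q))
    have hUsub : {z : Mink | (p 0 < z 0 ∧ 0 < eta (z - p)) ∧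
        (z 0 < q 0 ∧ 0 < eta (q - z))} ⊆ Diamond p q := by
      rintro z ⟨⟨h1, h2⟩, ⟨h3, h4⟩⟩
      exact ⟨⟨by simpa [Pi.sub_apply] using h1.le, h2.le⟩,
             ⟨by simpa [Pi.sub_apply] using h3.le, h4.le⟩⟩
    apply interior_maximal hUsub hUopen
    refine ⟨⟨?_, ?_⟩, ?_, ?_⟩
    · rw [hp0]; linarith
    · rw [etaeq, hp0, hp1, hp2, hp3]; nlinarith
    · rw [hq0]; linarith
    · rw [etaeq, hq0, hq1, hq2, hq3]; nlinarith
  · rintro ⟨⟨h1, h2⟩, ⟨h3, h4⟩⟩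
    simp only [Pi.sub_apply, hp0, hq0] at h1 h3
    rw [etaeq, hp0, hp1, hp2, hp3] at h2
    have hb4 : x 0 - (a:ℝ) < 4*δ := by linarith
    have e1 : (x 1 - (s1:ℝ))^2 ≤ (x 0 - (a:ℝ))^2 := by
      linarith [sq_nonneg (x 2 - (s2:ℝ)), sq_nonneg (x 3 - (s3:ℝ))]
    have e2 : (x 2 - (s2:ℝ))^2 ≤ (x 0 - (a:ℝ))^2 := by
      linarith [sq_nonneg (x 1 - (s1:ℝ)), sq_nonneg (x 3 - (s3:ℝ))]
    have e3 : (x 3 - (s3:ℝ))^2 ≤ (x 0 - (a:ℝ))^2 := by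
      linarith [sq_nonneg (x 1 - (s1:ℝ)), sq_nonneg (x 2 - (s2:ℝ))]
    have g1 := abs_le.1 (abs_le_of_sq_le _ _ h1 e1)
    have g2 := abs_le.1 (abs_le_of_sq_le _ _ h1 e2)
    have g3 := abs_le.1 (abs_le_of_sq_le _ _ h1 e3)
    obtain ⟨g1a, g1b⟩ := g1
    obtain ⟨g2a, g2b⟩ := g2
    obtain ⟨g3a, g3b⟩ := g3
    have hxj1 : |x 1 - y 1| < 5*δ := by
      rcases abs_cases (x 1 - y 1) with ⟨he, _⟩ | ⟨he, _⟩ <;> rw [he] <;> linarith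
    have hxj2 : |x 2 - y 2| < 5*δ := by
      rcases abs_cases (x 2 - y 2) with ⟨he, _⟩ | ⟨he, _⟩ <;> rw [he] <;> linarith
    have hxj3 : |x 3 - y 3| < 5*δ := by
      rcases abs_cases (x 3 - y 3) with ⟨he, _⟩ | ⟨he, _⟩ <;> rw [he] <;> linarith
    have hxj0 : |x 0 - y 0| < 5*δ := by
      rcases abs_cases (x 0 - y 0) with ⟨he, _⟩ | ⟨he, _⟩ <;> rw [he] <;> linarith
    have : ε < 5*δ := by
      fin_cases j0
      · exact hxj0
      · exact hxj1
      · exact hxj2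
      · exact hxj3
    linarith

/-- Rational closed diamonds form a closed base for the co-compact topology:
for every Euclidean-compact set `K` and every `x ∉ K` there are finitely many
rational diamonds whose interiors cover `K` and whose union misses `x`. -/
theorem rational_diamonds_closed_base (K : Set Mink) (hK : IsCompact K)
    (x : Mink) (hx : x ∉ K) :
    ∃ (n : ℕ) (p q : Fin n → Mink),
      (∀ i, IsRationalPoint (p i) ∧ IsRationalPoint (q i) ∧ causalLe (p i) (q i)) ∧
      K ⊆ ⋃ i, interior (Diamond (p i) (q i)) ∧
      x ∉ ⋃ i, Diamond (p i) (q i) := by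
  have key : ∀ y ∈ K, ∃ pq : Mink × Mink, IsRationalPoint pq.1 ∧ IsRationalPoint pq.2 ∧
      causalLe pq.1 pq.2 ∧ y ∈ interior (Diamond pq.1 pq.2) ∧ x ∉ Diamond pq.1 pq.2 := by
    intro y hy
    obtain ⟨p, q, h1, h2, h3, h4, h5⟩ := exists_good_diamond (show x ≠ y from fun h => hx (h ▸ hy))
    exact ⟨(p, q), h1, h2, h3, h4, h5⟩
  choose! f hf1 hf2 hf3 hf4 hf5 using key
  obtain ⟨t, htK, htfin, htcov⟩ := hK.elim_finite_subcover_image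
    (fun y (_ : y ∈ K) => isOpen_interior (s := Diamond (f y).1 (f y).2))
    (fun y hy => mem_biUnion hy (hf4 y hy))
  obtain ⟨n, g, hg⟩ := htfin.fin_embedding
  have hmem : ∀ i : Fin n, g i ∈ K := fun i => htK (hg ▸ mem_range_self i)
  refine ⟨n, fun i => (f (g i)).1, fun i => (f (g i)).2, ?_, ?_, ?_⟩
  · intro i
    exact ⟨hf1 _ (hmem i), hf2 _ (hmem i), hf3 _ (hmem i)⟩
  · intro z hz
    obtain ⟨y, hyt, hzy⟩ := mem_iUnion₂.1 (htcov hz)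
    obtain ⟨i, hi⟩ := (show y ∈ range g from hg ▸ hyt)
    subst hi
    exact mem_iUnion.2 ⟨i, hzy⟩
  · rw [mem_iUnion]
    rintro ⟨i, hi⟩
    exact hf5 _ (hmem i) hi
end

section
/- In Minkowski space, open diamonds D(p,q) = {x : p ≪ x ≪ q}, where v ≪ w means w − v is timelike (η(w−v,w−v) > 0) and future-oriented ((w−v)₀ > 0), form a base for the Euclidean topology on ℝ⁴. -/
open Set

/-- The chronological relation: `v ≪ w` iff `w - v` is timelike and future-oriented. -/
def chronLt (v w : Mink) : Prop := 0 < (w - v) 0 ∧ 0 < eta (w - v)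

/-- The open diamond determined by two points. -/
def openDiamond (p q : Mink) : Set Mink := {x | chronLt p x ∧ chronLt x q}

lemma eta_continuous : Continuous (eta : Mink → ℝ) := by
  unfold eta; fun_prop

lemma openDiamond_isOpen (p q : Mink) : IsOpen (openDiamond p q) := by
  have : openDiamond p q =
      (((fun x : Mink => (x - p) 0) ⁻¹' Ioi 0) ∩ ((fun x : Mink => eta (x - p)) ⁻¹' Ioi 0)) ∩
      (((fun x : Mink => (q - x) 0) ⁻¹' Ioi 0) ∩ ((fun x : Mink => eta (q - x)) ⁻¹' Ioi 0)) := by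
    ext x; simp [openDiamond, chronLt]
  rw [this]
  refine (IsOpen.inter (IsOpen.inter ?_ ?_) (IsOpen.inter ?_ ?_)) <;>
    apply isOpen_Ioi.preimage
  · fun_prop
  · exact eta_continuous.comp (by fun_prop)
  · fun_prop
  · exact eta_continuous.comp (by fun_prop)

/-- Open diamonds form a base for the Euclidean topology on `ℝ⁴`. -/
theorem openDiamonds_isTopologicalBasis :
    TopologicalSpace.IsTopologicalBasis
      {D : Set Mink | ∃ p q : Mink, D = openDiamond p q} := by
  apply TopologicalSpace.isTopologicalBasis_of_isOpen_of_nhds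
  · rintro D ⟨p, q, rfl⟩
    exact openDiamond_isOpen p q
  · intro x U hxU hU
    obtain ⟨ε, hε, hball⟩ := Metric.isOpen_iff.mp hU x hxU
    set e0 : Mink := fun i => if i = 0 then 1 else 0 with he0
    refine ⟨openDiamond (x - (ε/2) • e0) (x + (ε/2) • e0), ⟨_, _, rfl⟩, ?_, ?_⟩
    · constructor <;> constructor <;>
        simp [eta, e0, Pi.sub_apply, Pi.add_apply, Pi.smul_apply] <;> positivity
    · intro y hy
      obtain ⟨⟨h1, h2⟩, h3, h4⟩ := hy
      apply hball
      rw [Metric.mem_ball, dist_pi_lt_iff hε]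
      intro i
      simp only [eta, Pi.sub_apply, Pi.add_apply, Pi.smul_apply, e0, smul_eq_mul,
        mul_ite, mul_one, mul_zero] at h1 h2 h3 h4
      simp only [show (1:Fin 4) ≠ 0 by decide, show (2:Fin 4) ≠ 0 by decide,
        show (3:Fin 4) ≠ 0 by decide, if_true, if_false, reduceIte] at h1 h2 h3 h4
      rw [Real.dist_eq, abs_sub_lt_iff]
      have hi : i = 0 ∨ i = 1 ∨ i = 2 ∨ i = 3 := by omega
      rcases hi with rfl | rfl | rfl | rfl <;> constructor <;> nlinarith
end
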